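/- Suppose $\delta = -\tilde B^T P z \|Q\|^2 - \hat E Q + E Q$ where $z \in \mathbb{R}^n$, $P \in \mathbb{R}^{n\times n}$ symmetric, $\tilde B \in \mathbb{R}^{n\times m}$, $Q \in \mathbb{R}^m$, $E, \hat E \in \mathbb{R}^{m\times m}$, and let $e_E = E - \hat E$. Then $-\|z\|^2 + 2 z^T P \tilde B \delta \le -\|z\|^2 + \tfrac{1}{2}\|e_E\|_F^2$. -/
import Mathlib


open Matrix

/-- Substituting the robust control term `δ = -B̃ᵀPz‖Q‖² - ÊQ + EQ` into the Lyapunov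
derivative and completing the square yields
`-‖z‖² + 2 zᵀPB̃δ ≤ -‖z‖² + (1/2)‖e_E‖_F²`. -/
theorem robust_lyapunov_bound {n m : ℕ}
    (z : Fin n → ℝ) (P : Matrix (Fin n) (Fin n) ℝ) (B : Matrix (Fin n) (Fin m) ℝ)
    (Q : Fin m → ℝ) (E Ehat : Matrix (Fin m) (Fin m) ℝ) (δ : Fin m → ℝ)
    (hPsym : P.IsSymm)
    (hδ : δ = -(∑ k, (Q k) ^ 2) • (Bᵀ *ᵥ (P *ᵥ z)) - Ehat *ᵥ Q + E *ᵥ Q) :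
    -(∑ i, (z i) ^ 2) + 2 * (z ⬝ᵥ (P *ᵥ (B *ᵥ δ))) ≤
      -(∑ i, (z i) ^ 2) + (1 / 2) * (∑ i, ∑ j, ((E - Ehat) i j) ^ 2) := by
  set w : Fin m → ℝ := Bᵀ *ᵥ (P *ᵥ z) with hw
  set c : ℝ := ∑ k, (Q k) ^ 2 with hc
  have hzP : z ᵥ* P = P *ᵥ z := by rw [← mulVec_transpose, hPsym.eq]
  have hdot : z ⬝ᵥ (P *ᵥ (B *ᵥ δ)) = w ⬝ᵥ δ := by
    rw [dotProduct_mulVec, dotProduct_mulVec, hw, mulVec_transpose, hzP]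
  have hexp : w ⬝ᵥ δ = -c * (w ⬝ᵥ w) + w ⬝ᵥ ((E - Ehat) *ᵥ Q) := by
    rw [hδ, dotProduct_add, dotProduct_sub, dotProduct_smul, sub_mulVec,
      dotProduct_sub, smul_eq_mul]
    ring
  rw [hdot, hexp]
  have hc0 : 0 ≤ c := Finset.sum_nonneg fun k _ => sq_nonneg _
  have key : 2 * (w ⬝ᵥ ((E - Ehat) *ᵥ Q)) ≤
      2 * c * (w ⬝ᵥ w) + (1 / 2) * (∑ i, ∑ j, ((E - Ehat) i j) ^ 2) := by
    have h1 : w ⬝ᵥ ((E - Ehat) *ᵥ Q) = ∑ i, ∑ j, w i * ((E - Ehat) i j * Q j) := by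
      simp [dotProduct, mulVec, Finset.mul_sum]
    have h2 : c * (w ⬝ᵥ w) = ∑ i, ∑ j, (Q j) ^ 2 * (w i) ^ 2 := by
      rw [hc, dotProduct]
      rw [Finset.sum_mul_sum]
      rw [Finset.sum_comm]
      congr 1; ext i; congr 1; ext j; ring
    rw [h1, mul_assoc, h2, Finset.mul_sum, Finset.mul_sum, Finset.mul_sum, ← Finset.sum_add_distrib]
    refine Finset.sum_le_sum fun i _ => ?_
    rw [Finset.mul_sum, Finset.mul_sum, Finset.mul_sum, ← Finset.sum_add_distrib]
    refine Finset.sum_le_sum fun j _ => ?_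
    nlinarith [sq_nonneg (2 * w i * Q j - (E - Ehat) i j)]
  nlinarith [key]
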